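/- arXiv:1802.03042 — 4 statements merged into one kernel-verified Lean document; each statement's English description precedes it below -/
import Mathlib

section
/- Suppose ρ : 𝒳 → ℝ is a convex risk measure, H is a convex subset of the set of trading strategies, and for each ω ∈ Ω the total cost functional δ ↦ C_T(δ)(ω) is convex in δ. Then π(X) := inf_{δ∈H} ρ(X + (δ·S)_T − C_T(δ)) is convex: for every X₁, X₂ ∈ 𝒳 and every α ∈ (0,1), π(αX₁ + (1−α)X₂) ≤ α·π(X₁) + (1−α)·π(X₂), the inequality being understood in ℝ ∪ {−∞}. -/
open Finset

noncomputable section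

/-- Trading gains `(δ·S)_T = Σ_{k<n} δ_k · (S_{k+1} − S_k)`. -/
def gainsT {Ω : Type*} (d n : ℕ) (S : ℕ → Ω → Fin d → ℝ)
    (δ : ℕ → Ω → Fin d → ℝ) (ω : Ω) : ℝ :=
  ∑ k ∈ Finset.range n, ∑ i, δ k ω i * (S (k + 1) ω i - S k ω i)

/-- Position at time `k`, with the conventions `δ₋₁ = δ_n = 0`
(positions at indices `≥ n` are clamped to `0`). -/
def posn {Ω : Type*} (d n : ℕ) (δ : ℕ → Ω → Fin d → ℝ) (k : ℕ) (ω : Ω) : Fin d → ℝ :=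
  if k < n then δ k ω else 0

/-- Increment `δ_k − δ_{k−1}` (with `δ₋₁ = 0`). -/
def incr {Ω : Type*} (d n : ℕ) (δ : ℕ → Ω → Fin d → ℝ) (k : ℕ) (ω : Ω) : Fin d → ℝ :=
  posn d n δ k ω - if k = 0 then 0 else posn d n δ (k - 1) ω

/-- Total trading cost `C_T(δ) = Σ_{k=0}^{n} c_k(δ_k − δ_{k−1})`. -/
def costT {Ω : Type*} (d n : ℕ) (c : ℕ → Ω → (Fin d → ℝ) → ℝ)
    (δ : ℕ → Ω → Fin d → ℝ) (ω : Ω) : ℝ :=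
  ∑ k ∈ Finset.range (n + 1), c k ω (incr d n δ k ω)

/-- `π(X) = inf_{δ ∈ H} ρ(X + (δ·S)_T − C_T(δ))`, valued in `ℝ ∪ {−∞}` (as `EReal`). -/
def piF {Ω : Type*} (d n : ℕ) (S : ℕ → Ω → Fin d → ℝ)
    (c : ℕ → Ω → (Fin d → ℝ) → ℝ) (H : Set (ℕ → Ω → Fin d → ℝ))
    (ρ : (Ω → ℝ) → ℝ) (X : Ω → ℝ) : EReal :=
  ⨅ δ ∈ H, ((ρ (fun ω => X ω + gainsT d n S δ ω - costT d n c δ ω) : EReal))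

lemma gains_mix {Ω : Type*} (d n : ℕ) (S : ℕ → Ω → Fin d → ℝ)
    (δ₁ δ₂ : ℕ → Ω → Fin d → ℝ) (a : ℝ) (ω : Ω) :
    gainsT d n S (a • δ₁ + (1 - a) • δ₂) ω
      = a * gainsT d n S δ₁ ω + (1 - a) * gainsT d n S δ₂ ω := by
  simp only [gainsT, Finset.mul_sum, ← Finset.sum_add_distrib]
  refine Finset.sum_congr rfl fun k _ => Finset.sum_congr rfl fun i _ => ?_
  simp only [Pi.add_apply, Pi.smul_apply, smul_eq_mul]
  ring

/-- if `ρ` is a convex risk measure, `H` is convex and the total-cost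
functional is convex in the strategy (for each `ω`), then `π` is convex
(with values in `ℝ ∪ {−∞}`). -/
theorem piF_convex
    {Ω : Type*} [Fintype Ω] [Nonempty Ω]
    (P : Ω → ℝ) (hPpos : ∀ ω, 0 < P ω) (hPsum : ∑ ω, P ω = 1)
    (d n : ℕ) (S : ℕ → Ω → Fin d → ℝ)
    (c : ℕ → Ω → (Fin d → ℝ) → ℝ)
    (hc0 : ∀ k ω, c k ω 0 = 0) (hcnonneg : ∀ k ω v, 0 ≤ c k ω v)
    (H : Set (ℕ → Ω → Fin d → ℝ)) (hH : H.Nonempty)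
    (hHconv : Convex ℝ H)
    (hCconv : ∀ ω : Ω,
      ConvexOn ℝ (Set.univ : Set (ℕ → Ω → Fin d → ℝ)) (fun δ => costT d n c δ ω))
    (ρ : (Ω → ℝ) → ℝ)
    (hmono : ∀ X₁ X₂ : Ω → ℝ, (∀ ω, X₂ ω ≤ X₁ ω) → ρ X₁ ≤ ρ X₂)
    (hconv : ∀ (X₁ X₂ : Ω → ℝ) (a : ℝ), a ∈ Set.Icc (0 : ℝ) 1 →
      ρ (fun ω => a * X₁ ω + (1 - a) * X₂ ω) ≤ a * ρ X₁ + (1 - a) * ρ X₂)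
    (hcash : ∀ (X : Ω → ℝ) (a : ℝ), ρ (fun ω => X ω + a) = ρ X - a) :
    ∀ (X₁ X₂ : Ω → ℝ) (a : ℝ), a ∈ Set.Ioo (0 : ℝ) 1 →
      piF d n S c H ρ (fun ω => a * X₁ ω + (1 - a) * X₂ ω) ≤
        (a : EReal) * piF d n S c H ρ X₁ + ((1 - a : ℝ) : EReal) * piF d n S c H ρ X₂ := by
  intro X₁ X₂ a ha
  obtain ⟨ha0, ha1⟩ := ha
  have ha0' : (0 : ℝ) < 1 - a := by linarith
  -- abbreviation for the risk of a hedged payoff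
  set f : (Ω → ℝ) → (ℕ → Ω → Fin d → ℝ) → ℝ :=
    fun X δ => ρ (fun ω => X ω + gainsT d n S δ ω - costT d n c δ ω) with hf
  have hpiF : ∀ X, piF d n S c H ρ X = ⨅ δ ∈ H, ((f X δ : EReal)) := fun X => rfl
  set Xm : Ω → ℝ := fun ω => a * X₁ ω + (1 - a) * X₂ ω with hXm
  -- the key pointwise/convexity estimate
  have key : ∀ δ₁ ∈ H, ∀ δ₂ ∈ H,
      f Xm (a • δ₁ + (1 - a) • δ₂) ≤ a * f X₁ δ₁ + (1 - a) * f X₂ δ₂ := by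
    intro δ₁ h₁ δ₂ h₂
    set δm := a • δ₁ + (1 - a) • δ₂ with hδm
    have hcost : ∀ ω, costT d n c δm ω ≤
        a * costT d n c δ₁ ω + (1 - a) * costT d n c δ₂ ω := by
      intro ω
      have := (hCconv ω).2 (Set.mem_univ δ₁) (Set.mem_univ δ₂) ha0.le ha0'.le (by ring)
      simpa [smul_eq_mul] using this
    have hpt : ∀ ω,
        a * (X₁ ω + gainsT d n S δ₁ ω - costT d n c δ₁ ω)
          + (1 - a) * (X₂ ω + gainsT d n S δ₂ ω - costT d n c δ₂ ω)
        ≤ Xm ω + gainsT d n S δm ω - costT d n c δm ω := by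
      intro ω
      have hg := gains_mix d n S δ₁ δ₂ a ω
      rw [← hδm] at hg
      have hc := hcost ω
      simp only [hXm]
      linarith
    calc f Xm δm ≤ ρ (fun ω =>
            a * (X₁ ω + gainsT d n S δ₁ ω - costT d n c δ₁ ω)
            + (1 - a) * (X₂ ω + gainsT d n S δ₂ ω - costT d n c δ₂ ω)) :=
          hmono _ _ hpt
      _ ≤ a * f X₁ δ₁ + (1 - a) * f X₂ δ₂ :=
          hconv _ _ a ⟨ha0.le, by linarith⟩
  have hmem : ∀ δ₁ ∈ H, ∀ δ₂ ∈ H, a • δ₁ + (1 - a) • δ₂ ∈ H := fun δ₁ h₁ δ₂ h₂ =>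
    hHconv h₁ h₂ ha0.le ha0'.le (by ring)
  have hle : ∀ X (δ : ℕ → Ω → Fin d → ℝ), δ ∈ H →
      piF d n S c H ρ X ≤ ((f X δ : EReal)) := by
    intro X δ hδ
    rw [hpiF]
    exact iInf₂_le δ hδ
  -- extracting approximate minimizers
  have hlt : ∀ X (r : ℝ), piF d n S c H ρ X < (r : EReal) → ∃ δ ∈ H, f X δ < r := by
    intro X r h
    rw [hpiF] at h
    obtain ⟨δ, hδ⟩ := iInf_lt_iff.1 h
    obtain ⟨hδH, hlt'⟩ := iInf_lt_iff.1 hδ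
    exact ⟨δ, hδH, by exact_mod_cast hlt'⟩
  obtain ⟨δ₀, hδ₀⟩ := hH
  have hAtop : piF d n S c H ρ X₁ ≠ ⊤ :=
    ne_top_of_le_ne_top (EReal.coe_ne_top _) (hle X₁ δ₀ hδ₀)
  have hBtop : piF d n S c H ρ X₂ ≠ ⊤ :=
    ne_top_of_le_ne_top (EReal.coe_ne_top _) (hle X₂ δ₀ hδ₀)
  -- the degenerate case where one of the infima is −∞
  have hbot : piF d n S c H ρ X₁ = ⊥ ∨ piF d n S c H ρ X₂ = ⊥ →
      piF d n S c H ρ Xm = ⊥ := by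
    rintro hcase
    rw [EReal.eq_bot_iff_forall_lt]
    intro r
    rcases hcase with hcase | hcase
    · set M := f X₂ δ₀ with hM
      set r₁ : ℝ := (r - (1 - a) * M) / a - 1 with hr₁
      obtain ⟨δ₁, hδ₁H, hδ₁⟩ := hlt X₁ r₁
        (by rw [hcase]; exact bot_lt_iff_ne_bot.2 (EReal.coe_ne_bot _))
      refine lt_of_le_of_lt (hle Xm _ (hmem δ₁ hδ₁H δ₀ hδ₀)) ?_
      have h1 : f Xm (a • δ₁ + (1 - a) • δ₀) ≤ a * f X₁ δ₁ + (1 - a) * M :=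
        key δ₁ hδ₁H δ₀ hδ₀
      have h2 : a * f X₁ δ₁ + (1 - a) * M < r := by
        have h3 : a * f X₁ δ₁ < a * r₁ := (mul_lt_mul_iff_right₀ ha0).2 hδ₁
        have hr : a * r₁ = r - (1 - a) * M - a := by rw [hr₁]; field_simp; try ring
        linarith
      exact_mod_cast lt_of_le_of_lt h1 h2
    · set M := f X₁ δ₀ with hM
      set r₂ : ℝ := (r - a * M) / (1 - a) - 1 with hr₂
      obtain ⟨δ₂, hδ₂H, hδ₂⟩ := hlt X₂ r₂
        (by rw [hcase]; exact bot_lt_iff_ne_bot.2 (EReal.coe_ne_bot _))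
      refine lt_of_le_of_lt (hle Xm _ (hmem δ₀ hδ₀ δ₂ hδ₂H)) ?_
      have h1 : f Xm (a • δ₀ + (1 - a) • δ₂) ≤ a * M + (1 - a) * f X₂ δ₂ :=
        key δ₀ hδ₀ δ₂ hδ₂H
      have h2 : a * M + (1 - a) * f X₂ δ₂ < r := by
        have h3 : (1 - a) * f X₂ δ₂ < (1 - a) * r₂ := (mul_lt_mul_iff_right₀ ha0').2 hδ₂
        have hr : (1 - a) * r₂ = r - a * M - (1 - a) := by rw [hr₂]; field_simp; try ring
        linarith
      exact_mod_cast lt_of_le_of_lt h1 h2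
  rcases eq_or_ne (piF d n S c H ρ X₁) ⊥ with hAbot | hAbot
  · rw [hbot (Or.inl hAbot)]; exact bot_le
  rcases eq_or_ne (piF d n S c H ρ X₂) ⊥ with hBbot | hBbot
  · rw [hbot (Or.inr hBbot)]; exact bot_le
  -- main case: both infima are real
  obtain ⟨p₁, hA⟩ : ∃ p : ℝ, (p : EReal) = piF d n S c H ρ X₁ :=
    ⟨_, EReal.coe_toReal hAtop hAbot⟩
  obtain ⟨p₂, hB⟩ : ∃ p : ℝ, (p : EReal) = piF d n S c H ρ X₂ :=
    ⟨_, EReal.coe_toReal hBtop hBbot⟩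
  rw [← hA, ← hB]
  have hgoal : (a : EReal) * (p₁ : EReal) + ((1 - a : ℝ) : EReal) * (p₂ : EReal)
      = ((a * p₁ + (1 - a) * p₂ : ℝ) : EReal) := by
    rw [← EReal.coe_mul, ← EReal.coe_mul, ← EReal.coe_add]
  rw [hgoal]
  have hstep : ∀ ε : ℝ, 0 < ε →
      piF d n S c H ρ Xm ≤ ((a * p₁ + (1 - a) * p₂ + ε : ℝ) : EReal) := by
    intro ε hε
    obtain ⟨δ₁, hδ₁H, hδ₁⟩ := hlt X₁ (p₁ + ε)
      (by rw [← hA]; exact_mod_cast (by linarith : p₁ < p₁ + ε))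
    obtain ⟨δ₂, hδ₂H, hδ₂⟩ := hlt X₂ (p₂ + ε)
      (by rw [← hB]; exact_mod_cast (by linarith : p₂ < p₂ + ε))
    refine le_trans (hle Xm _ (hmem δ₁ hδ₁H δ₂ hδ₂H)) ?_
    have h1 := key δ₁ hδ₁H δ₂ hδ₂H
    have h2 : a * f X₁ δ₁ + (1 - a) * f X₂ δ₂ ≤ a * p₁ + (1 - a) * p₂ + ε := by
      have e1 : a * f X₁ δ₁ ≤ a * (p₁ + ε) := by nlinarith
      have e2 : (1 - a) * f X₂ δ₂ ≤ (1 - a) * (p₂ + ε) := by nlinarith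
      nlinarith
    exact_mod_cast le_trans h1 h2
  by_contra hcon
  push_neg at hcon
  have hne : piF d n S c H ρ Xm ≠ ⊤ :=
    ne_top_of_le_ne_top (EReal.coe_ne_top _) (hstep 1 one_pos)
  have hnb : piF d n S c H ρ Xm ≠ ⊥ := by
    intro h; rw [h] at hcon; exact not_lt_bot hcon
  obtain ⟨q, hx⟩ : ∃ q : ℝ, (q : EReal) = piF d n S c H ρ Xm :=
    ⟨_, EReal.coe_toReal hne hnb⟩
  rw [← hx] at hcon hstep
  have hq : a * p₁ + (1 - a) * p₂ < q := by exact_mod_cast hcon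
  have h := hstep ((q - (a * p₁ + (1 - a) * p₂)) / 2) (by linarith)
  have h' : q ≤ a * p₁ + (1 - a) * p₂ + (q - (a * p₁ + (1 - a) * p₂)) / 2 := by
    exact_mod_cast h
  linarith
end
end

section
/- Let (ℱ_k)_{k=0,…,n} be a filtration on Ω, suppose the ℝ^d-valued price process S = (S_k)_{k=0,…,n} is a martingale under P with respect to (ℱ_k), suppose every admissible strategy δ ∈ H is adapted (δ_k is ℱ_k-measurable for each k = 0,…,n−1), and suppose the zero strategy belongs to H. Let ℓ : ℝ → ℝ be nondecreasing and convex and let ρ be the optimized certainty equivalent ρ(X) := inf_{w∈ℝ} { w + E[ℓ(−X − w)] }. Then π(0) = ρ(0), i.e. inf_{δ∈H} ρ((δ·S)_T − C_T(δ)) = ρ(0), the equality holding in ℝ ∪ {−∞}. -/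
open Finset

noncomputable section

open MeasureTheory

/-- The optimized certainty equivalent `ρ(X) = inf_{w∈ℝ} { w + E[ℓ(−X − w)] }` with
expectation taken under the measure `μ`, valued in `ℝ ∪ {−∞}` (as `EReal`). -/
def oceM {Ω : Type*} [MeasurableSpace Ω] (μ : Measure Ω) (ℓ : ℝ → ℝ) (X : Ω → ℝ) : EReal :=
  ⨅ w : ℝ, (((w + ∫ ω, ℓ (-X ω - w) ∂μ) : ℝ) : EReal)


/-- integral of an adapted term times a martingale increment component is zero -/
lemma integral_term_zero {Ω : Type*} [Fintype Ω] {m0 : MeasurableSpace Ω}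
    [MeasurableSingletonClass Ω]
    (μ : Measure Ω) [IsProbabilityMeasure μ] (ℱ : Filtration ℕ m0) {d : ℕ}
    {S : ℕ → Ω → Fin d → ℝ} (hS : Martingale S ℱ μ) (k : ℕ) (i : Fin d)
    {f : Ω → ℝ} (hf : StronglyMeasurable[ℱ k] f) :
    ∫ ω, f ω * (S (k + 1) ω i - S k ω i) ∂μ = 0 := by
  set g : Ω → ℝ := fun ω => S (k + 1) ω i - S k ω i with hg
  have hsig : SigmaFinite (μ.trim (ℱ.le k)) := by infer_instance
  have hcond : (0 : Ω → ℝ) =ᵐ[μ] μ[g | ℱ k] := by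
    refine ae_eq_condExp_of_forall_setIntegral_eq (ℱ.le k) (Integrable.of_finite)
      (fun s _ _ => (Integrable.of_finite).integrableOn) (fun s hs hμs => ?_)
      (StronglyMeasurable.aestronglyMeasurable (@stronglyMeasurable_zero Ω ℝ (ℱ k) _ _))
    have hcomp : ∀ j : ℕ, ∫ ω in s, S j ω i ∂μ =
        (∫ ω in s, S j ω ∂μ) i := by
      intro j
      have := (ContinuousLinearMap.proj (R := ℝ) (φ := fun _ : Fin d => ℝ) i).integral_comp_comm
        (μ := μ.restrict s) (φ := S j) (Integrable.of_finite.restrict)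
      simpa using this
    have hmart := hS.setIntegral_eq (Nat.le_succ k) hs
    have : ∫ ω in s, g ω ∂μ = 0 := by
      rw [integral_sub Integrable.of_finite.restrict Integrable.of_finite.restrict,
        hcomp (k+1), hcomp k, ← hmart, sub_self]
    simp [this]
  have hmul : μ[fun ω => f ω * g ω | ℱ k] =ᵐ[μ] fun ω => f ω * (μ[g | ℱ k]) ω := by
    have := condExp_mul_of_stronglyMeasurable_left (μ := μ) hf
      (Integrable.of_finite : Integrable (f * g) μ) (Integrable.of_finite)
    exact this
  have h0 : μ[fun ω => f ω * g ω | ℱ k] =ᵐ[μ] (0 : Ω → ℝ) := by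
    filter_upwards [hmul, hcond] with ω h1 h2
    simp [h1, ← h2]
  calc ∫ ω, f ω * g ω ∂μ = ∫ ω, (μ[fun ω => f ω * g ω | ℱ k]) ω ∂μ :=
        (integral_condExp (ℱ.le k)).symm
    _ = ∫ _ : Ω, (0:ℝ) ∂μ := integral_congr_ae h0
    _ = 0 := by simp

lemma integral_gains_zero {Ω : Type*} [Fintype Ω] {m0 : MeasurableSpace Ω}
    [MeasurableSingletonClass Ω]
    (μ : Measure Ω) [IsProbabilityMeasure μ] (ℱ : Filtration ℕ m0) {d n : ℕ}
    {S : ℕ → Ω → Fin d → ℝ} (hS : Martingale S ℱ μ)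
    {δ : ℕ → Ω → Fin d → ℝ} (hδ : ∀ k, StronglyMeasurable[ℱ k] (δ k)) :
    ∫ ω, gainsT d n S δ ω ∂μ = 0 := by
  simp only [gainsT]
  rw [integral_finset_sum _ (fun k _ => Integrable.of_finite)]
  refine Finset.sum_eq_zero fun k _ => ?_
  rw [integral_finset_sum _ (fun i _ => Integrable.of_finite)]
  refine Finset.sum_eq_zero fun i _ => ?_
  exact integral_term_zero μ ℱ hS k i
    ((continuous_apply i).comp_stronglyMeasurable (hδ k))

lemma jensen_key {Ω : Type*} [Fintype Ω] {m0 : MeasurableSpace Ω}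
    [MeasurableSingletonClass Ω]
    (μ : Measure Ω) [IsProbabilityMeasure μ]
    (ℓ : ℝ → ℝ) (hℓmono : Monotone ℓ) (hℓconv : ConvexOn ℝ Set.univ ℓ)
    (X : Ω → ℝ) (hX : ∫ ω, X ω ∂μ ≤ 0) (w : ℝ) :
    ℓ (-w) ≤ ∫ ω, ℓ (-X ω - w) ∂μ := by
  have hsum1 : ∑ ω : Ω, (μ {ω}).toReal = 1 := by
    have h := integral_fintype (μ := μ) (f := fun _ : Ω => (1:ℝ)) Integrable.of_finite
    show ∑ ω : Ω, μ.real {ω} = 1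
    simpa using h.symm
  have hEX : ∑ ω : Ω, (μ {ω}).toReal • (-X ω - w) = -(∫ ω, X ω ∂μ) - w := by
    show ∑ ω : Ω, μ.real {ω} • (-X ω - w) = _
    rw [← integral_fintype (f := fun ω => -X ω - w) Integrable.of_finite,
      integral_sub Integrable.of_finite (integrable_const w), integral_neg, integral_const]
    simp
  have hj := hℓconv.map_sum_le (t := Finset.univ) (p := fun ω => -X ω - w)
    (fun ω _ => ENNReal.toReal_nonneg) hsum1 (fun ω _ => Set.mem_univ _)
  calc ℓ (-w) ≤ ℓ (-(∫ ω, X ω ∂μ) - w) := hℓmono (by linarith)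
    _ = ℓ (∑ ω : Ω, (μ {ω}).toReal • (-X ω - w)) := by rw [hEX]
    _ ≤ ∑ ω : Ω, (μ {ω}).toReal • ℓ (-X ω - w) := hj
    _ = ∫ ω, ℓ (-X ω - w) ∂μ := (integral_fintype Integrable.of_finite).symm

/-- if `S` is a martingale, every strategy in `H` is adapted, `0 ∈ H` and
`ρ` is the optimized certainty equivalent of a nondecreasing convex loss `ℓ`, then
`π(0) = ρ(0)`, i.e. `inf_{δ∈H} ρ((δ·S)_T − C_T(δ)) = ρ(0)` in `ℝ ∪ {−∞}`. -/
theorem piF_zero_eq_oce_zero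
    {Ω : Type*} [Fintype Ω] [Nonempty Ω] {m0 : MeasurableSpace Ω}
    [MeasurableSingletonClass Ω]
    (μ : Measure Ω) [IsProbabilityMeasure μ] (hfull : ∀ ω : Ω, 0 < μ {ω})
    (ℱ : Filtration ℕ m0)
    (d n : ℕ) (S : ℕ → Ω → Fin d → ℝ)
    (hS : Martingale S ℱ μ)
    (c : ℕ → Ω → (Fin d → ℝ) → ℝ)
    (hc0 : ∀ k ω, c k ω 0 = 0) (hcnonneg : ∀ k ω v, 0 ≤ c k ω v)
    (H : Set (ℕ → Ω → Fin d → ℝ)) (hH : H.Nonempty)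
    (hadapted : ∀ δ ∈ H, ∀ k, StronglyMeasurable[ℱ k] (δ k))
    (hzero : (fun _ _ => 0 : ℕ → Ω → Fin d → ℝ) ∈ H)
    (ℓ : ℝ → ℝ) (hℓmono : Monotone ℓ) (hℓconv : ConvexOn ℝ Set.univ ℓ) :
    (⨅ δ ∈ H, oceM μ ℓ (fun ω => gainsT d n S δ ω - costT d n c δ ω)) =
      oceM μ ℓ (fun _ => 0) := by
  refine le_antisymm ?_ ?_
  · have hXzero : (fun ω => gainsT d n S (fun _ _ => 0) ω - costT d n c (fun _ _ => 0) ω)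
        = (fun _ : Ω => (0:ℝ)) := by
      funext ω
      have h1 : gainsT d n S (fun _ _ => 0) ω = 0 := by simp [gainsT]
      have h2 : costT d n c (fun _ _ => 0) ω = 0 := by
        simp [costT, incr, posn, hc0]
      rw [h1, h2, sub_zero]
    calc (⨅ δ ∈ H, oceM μ ℓ (fun ω => gainsT d n S δ ω - costT d n c δ ω))
        ≤ oceM μ ℓ (fun ω => gainsT d n S (fun _ _ => 0) ω - costT d n c (fun _ _ => 0) ω) :=
          iInf₂_le _ hzero
      _ = oceM μ ℓ (fun _ => 0) := by rw [hXzero]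
  · refine le_iInf₂ fun δ hδ => ?_
    unfold oceM
    refine iInf_mono fun w => ?_
    have hint : ∫ ω, (gainsT d n S δ ω - costT d n c δ ω) ∂μ ≤ 0 := by
      rw [integral_sub Integrable.of_finite Integrable.of_finite,
        integral_gains_zero μ ℱ hS (hadapted δ hδ)]
      have : 0 ≤ ∫ ω, costT d n c δ ω ∂μ := by
        refine integral_nonneg fun ω => ?_
        exact Finset.sum_nonneg fun k _ => hcnonneg _ _ _
      linarith
    have hkey := jensen_key μ ℓ hℓmono hℓconv _ hint w
    have hconst : ∫ _ : Ω, ℓ (-(0:ℝ) - w) ∂μ = ℓ (-w) := by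
      rw [integral_const]; simp
    refine EReal.coe_le_coe_iff.mpr ?_
    have : (∫ ω, ℓ (-(0:ℝ) - w) ∂μ) ≤ ∫ ω, ℓ (-(gainsT d n S δ ω - costT d n c δ ω) - w) ∂μ := by
      rw [hconst]; exact hkey
    linarith
end
end

section
/- Let ρ : 𝒳 → ℝ be a convex risk measure on the finite probability space Ω, and for every probability measure Q on Ω define the minimal penalty α(Q) := sup_{X∈𝒳} ( E_Q[−X] − ρ(X) ) ∈ ℝ ∪ {+∞}. Then ρ admits the robust representation ρ(X) = max_Q ( E_Q[−X] − α(Q) ) for every X ∈ 𝒳, where the maximum is taken over all probability measures Q on Ω and is attained (i.e. ρ(X) ≥ E_Q[−X] − α(Q) for every probability measure Q, and there exists a probability measure Q* with ρ(X) = E_{Q*}[−X] − α(Q*)). -/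
open Finset

noncomputable section

/-- The minimal penalty function `α(Q) = sup_X ( E_Q[−X] − ρ(X) )` of a risk measure
`ρ` on a finite probability space, for a weight function `Q`, valued in
`ℝ ∪ {+∞}` (as `EReal`; it is never `−∞`). -/
def penalty {Ω : Type*} [Fintype Ω] (ρ : (Ω → ℝ) → ℝ) (Q : Ω → ℝ) : EReal :=
  ⨆ X : Ω → ℝ, (((∑ ω, Q ω * (-X ω)) - ρ X : ℝ) : EReal)

/-- robust representation of convex risk measures on a finite
probability space: `ρ(X) = max_Q ( E_Q[−X] − α(Q) )`, the maximum over all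
probability measures `Q` on `Ω` being attained. -/
theorem robust_representation
    {Ω : Type*} [Fintype Ω] [Nonempty Ω]
    (P : Ω → ℝ) (hPpos : ∀ ω, 0 < P ω) (hPsum : ∑ ω, P ω = 1)
    (ρ : (Ω → ℝ) → ℝ)
    (hmono : ∀ X₁ X₂ : Ω → ℝ, (∀ ω, X₂ ω ≤ X₁ ω) → ρ X₁ ≤ ρ X₂)
    (hconv : ∀ (X₁ X₂ : Ω → ℝ) (a : ℝ), a ∈ Set.Icc (0 : ℝ) 1 →
      ρ (fun ω => a * X₁ ω + (1 - a) * X₂ ω) ≤ a * ρ X₁ + (1 - a) * ρ X₂)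
    (hcash : ∀ (X : Ω → ℝ) (a : ℝ), ρ (fun ω => X ω + a) = ρ X - a) :
    ∀ X : Ω → ℝ,
      (∀ Q : Ω → ℝ, (∀ ω, 0 ≤ Q ω) → (∑ ω, Q ω) = 1 →
        ((∑ ω, Q ω * (-X ω) : ℝ) : EReal) - penalty ρ Q ≤ (ρ X : EReal)) ∧
      (∃ Q : Ω → ℝ, (∀ ω, 0 ≤ Q ω) ∧ (∑ ω, Q ω) = 1 ∧
        (ρ X : EReal) = ((∑ ω, Q ω * (-X ω) : ℝ) : EReal) - penalty ρ Q) := by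
  classical
  intro X
  -- ρ is 1-Lipschitz
  have hlip : ∀ Y Z : Ω → ℝ, ρ Y ≤ ρ Z + ‖Z - Y‖ := by
    intro Y Z
    have h : ∀ ω, (fun ω => Z ω + -‖Z - Y‖) ω ≤ Y ω := by
      intro ω
      have h1 : ‖(Z - Y) ω‖ ≤ ‖Z - Y‖ := norm_le_pi_norm (Z - Y) ω
      have h2 : Z ω - Y ω ≤ ‖Z - Y‖ :=
        le_trans (le_abs_self _) (by simpa [Real.norm_eq_abs] using h1)
      simp only
      linarith
    have := hmono Y (fun ω => Z ω + -‖Z - Y‖) h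
    rw [hcash] at this
    linarith
  have contρ : Continuous ρ := by
    have : LipschitzWith 1 ρ := by
      refine LipschitzWith.of_dist_le_mul fun Y Z => ?_
      rw [Real.dist_eq, dist_eq_norm]
      have h1 := hlip Y Z
      have h2 := hlip Z Y
      rw [norm_sub_rev Z Y] at h1
      rw [abs_le]
      constructor
      · simp only [NNReal.coe_one, one_mul]
        linarith
      · simp only [NNReal.coe_one, one_mul]; linarith
    exact this.continuous
  set S : Set ((Ω → ℝ) × ℝ) := {p | ρ p.1 < p.2} with hS
  have hSopen : IsOpen S := isOpen_lt (contρ.comp continuous_fst) continuous_snd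
  have hSconv : Convex ℝ S := by
    rintro p hp q hq a b ha hb hab
    simp only [hS, Set.mem_setOf_eq] at hp hq ⊢
    have hb' : b = 1 - a := by linarith
    have h1 : (a • p + b • q).1 = fun ω => a * p.1 ω + (1 - a) * q.1 ω := by
      funext ω
      simp [hb', Prod.smul_fst, Pi.smul_apply, smul_eq_mul]
    have h2 : (a • p + b • q).2 = a * p.2 + (1 - a) * q.2 := by
      simp [hb', smul_eq_mul]
    rw [h1, h2]
    have h3 := hconv p.1 q.1 a ⟨ha, by linarith⟩
    rcases eq_or_lt_of_le ha with h | h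
    · have : a = 0 := h.symm
      subst this
      simp only [zero_mul, zero_add, sub_zero, one_mul] at h3 ⊢
      linarith
    · have h4 : a * ρ p.1 < a * p.2 := by exact mul_lt_mul_of_pos_left hp h
      have h5 : (1 - a) * ρ q.1 ≤ (1 - a) * q.2 := by
        apply mul_le_mul_of_nonneg_left hq.le; linarith
      linarith
  have hXS : ((X, ρ X) : (Ω → ℝ) × ℝ) ∉ S := by simp [hS]
  obtain ⟨f, hf⟩ := geometric_hahn_banach_open_point hSconv hSopen hXS
  set c : ℝ := f (0, 1) with hc
  set g : (Ω → ℝ) → ℝ := fun Y => f (Y, 0) with hg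
  have hf_split : ∀ (Y : Ω → ℝ) (t : ℝ), f (Y, t) = g Y + t * c := by
    intro Y t
    have hYt : ((Y, t) : (Ω → ℝ) × ℝ) = (Y, (0:ℝ)) + t • (((0:Ω → ℝ)), (1:ℝ)) := by
      simp [Prod.ext_iff]
    rw [hYt, map_add, map_smul]
    simp [hg, hc, smul_eq_mul]
  have hcneg : c < 0 := by
    have h1 : ((X, ρ X + 1) : (Ω → ℝ) × ℝ) ∈ S := by simp [hS]
    have h2 := hf _ h1
    rw [hf_split, hf_split] at h2
    nlinarith
  have key : ∀ Y : Ω → ℝ, g Y + ρ Y * c ≤ g X + ρ X * c := by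
    intro Y
    by_contra h
    push_neg at h
    set ε := (g Y + ρ Y * c - (g X + ρ X * c)) / (-c) with hε
    have hε0 : 0 < ε := div_pos (by linarith) (by linarith)
    have hmem : ((Y, ρ Y + ε) : (Ω → ℝ) × ℝ) ∈ S := by simp [hS]; linarith
    have h2 := hf _ hmem
    rw [hf_split, hf_split] at h2
    have hεc : ε * (-c) = g Y + ρ Y * c - (g X + ρ X * c) :=
      div_mul_cancel₀ _ (by linarith : (-c) ≠ 0)
    nlinarith
  set G : ((Ω → ℝ)) →ₗ[ℝ] ℝ := (f.toLinearMap).comp (LinearMap.inl ℝ (Ω → ℝ) ℝ) with hG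
  have hGg : ∀ Y, G Y = g Y := fun Y => rfl
  set Q : Ω → ℝ := fun ω => g (fun j => if ω = j then 1 else 0) / c with hQ
  have hgsum : ∀ Y : Ω → ℝ, g Y / (-c) = ∑ ω, Q ω * (-Y ω) := by
    intro Y
    rw [← hGg, LinearMap.pi_apply_eq_sum_univ G Y, Finset.sum_div]
    apply Finset.sum_congr rfl
    intro ω _
    rw [hGg]
    simp only [hQ, smul_eq_mul]
    ring
  have key2 : ∀ Y : Ω → ℝ, (∑ ω, Q ω * (-Y ω)) - ρ Y ≤ (∑ ω, Q ω * (-X ω)) - ρ X := by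
    intro Y
    have h := key Y
    have hc' : (0:ℝ) < -c := by linarith
    have h3 : (g Y + ρ Y * c) / (-c) ≤ (g X + ρ X * c) / (-c) := (div_le_div_iff_of_pos_right hc').mpr h
    have e1 : ∀ W : Ω → ℝ, (g W + ρ W * c) / (-c) = g W / (-c) - ρ W := by
      intro W
      have hc0 : c ≠ 0 := hcneg.ne
      field_simp
      ring
    rw [e1, e1, hgsum, hgsum] at h3
    exact h3
  have hQ0 : ∀ ω, 0 ≤ Q ω := by
    intro ω
    have hY : ∀ ω', X ω' ≤ (fun ω' => X ω' + (if ω = ω' then 1 else 0)) ω' := by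
      intro ω'
      simp only
      split_ifs <;> linarith
    have hρ := hmono _ X hY
    have h := key2 (fun ω' => X ω' + (if ω = ω' then 1 else 0))
    have hsum : ∑ ω', Q ω' * (-(X ω' + (if ω = ω' then 1 else 0)))
        = (∑ ω', Q ω' * (-X ω')) - Q ω := by
      have hterm : ∀ ω', Q ω' * (-(X ω' + (if ω = ω' then 1 else 0)))
          = Q ω' * (-X ω') - (if ω = ω' then Q ω' else 0) := by
        intro ω'; split_ifs <;> ring
      rw [Finset.sum_congr rfl (fun ω' _ => hterm ω'), Finset.sum_sub_distrib]
      congr 1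
      simp
    rw [hsum] at h
    linarith
  have hQ1 : ∑ ω, Q ω = 1 := by
    have hkm : ∀ m : ℝ, m * (1 - ∑ ω, Q ω) ≤ 0 := by
      intro m
      have h := key2 (fun ω' => X ω' + m)
      rw [hcash] at h
      have hsum : ∑ ω', Q ω' * (-(X ω' + m)) = (∑ ω', Q ω' * (-X ω')) - m * ∑ ω', Q ω' := by
        rw [Finset.mul_sum, ← Finset.sum_sub_distrib]
        apply Finset.sum_congr rfl
        intros; ring
      rw [hsum] at h
      nlinarith [h]
    have h1 := hkm 1
    have h2 := hkm (-1)
    nlinarith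
  have hpen : penalty ρ Q = (((∑ ω, Q ω * (-X ω)) - ρ X : ℝ) : EReal) := by
    apply le_antisymm
    · apply iSup_le
      intro Y
      exact_mod_cast key2 Y
    · exact le_iSup (fun Y => (((∑ ω, Q ω * (-Y ω)) - ρ Y : ℝ) : EReal)) X
  constructor
  · intro Q' hQ'0 hQ'1
    have hle : (((∑ ω, Q' ω * (-X ω)) - ρ X : ℝ) : EReal) ≤ penalty ρ Q' :=
      le_iSup (fun Y => (((∑ ω, Q' ω * (-Y ω)) - ρ Y : ℝ) : EReal)) X
    calc ((∑ ω, Q' ω * (-X ω) : ℝ) : EReal) - penalty ρ Q'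
        ≤ ((∑ ω, Q' ω * (-X ω) : ℝ) : EReal)
            - (((∑ ω, Q' ω * (-X ω)) - ρ X : ℝ) : EReal) := EReal.sub_le_sub le_rfl hle
      _ = (ρ X : EReal) := by norm_cast; ring
  · refine ⟨Q, hQ0, hQ1, ?_⟩
    rw [hpen]
    norm_cast
    ring
end
end

section
/- Let Ω be a finite set and let ρ : (Ω → ℝ) → ℝ be continuous (with respect to pointwise convergence on ℝ^Ω) and monotone decreasing (Y₁ ≥ Y₂ pointwise implies ρ(Y₁) ≤ ρ(Y₂)). Let X, G, C : Ω → ℝ and let (G_n)_{n∈ℕ}, (C_n)_{n∈ℕ} be sequences of functions Ω → ℝ such that G_n → G pointwise, each C_n ≥ 0, and lim sup_{n→∞} C_n(ω) ≤ C(ω) for every ω ∈ Ω. Then lim inf_{n→∞} ρ(X + G_n − C_n) ≤ ρ(X + G − C). -/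
open Filter

noncomputable section

/-- if `Ω` is finite, `ρ` is continuous (for pointwise convergence) and
monotone decreasing, `G_n → G` pointwise, `C_n ≥ 0` and `limsup_n C_n(ω) ≤ C(ω)` for
every `ω`, then `liminf_n ρ(X + G_n − C_n) ≤ ρ(X + G − C)`. -/
theorem liminf_risk_le_of_pointwise_limits
    {Ω : Type*} [Fintype Ω]
    (ρ : (Ω → ℝ) → ℝ) (hcont : Continuous ρ)
    (hmono : ∀ Y₁ Y₂ : Ω → ℝ, (∀ ω, Y₂ ω ≤ Y₁ ω) → ρ Y₁ ≤ ρ Y₂)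
    (X G C : Ω → ℝ) (Gseq Cseq : ℕ → Ω → ℝ)
    (hG : ∀ ω, Tendsto (fun n => Gseq n ω) atTop (nhds (G ω)))
    (hCnonneg : ∀ n ω, 0 ≤ Cseq n ω)
    (hC : ∀ ω, limsup (fun n => ((Cseq n ω : ℝ) : EReal)) atTop ≤ ((C ω : ℝ) : EReal)) :
    liminf (fun n => ((ρ (fun ω => X ω + Gseq n ω - Cseq n ω) : ℝ) : EReal)) atTop ≤
      ((ρ (fun ω => X ω + G ω - C ω) : ℝ) : EReal) := by
  set Y : Ω → ℝ := fun ω => X ω + G ω - C ω with hY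
  -- Step 1: for every ε > 0, the liminf is bounded by ρ (Y - ε)
  have key : ∀ ε : ℝ, 0 < ε →
      liminf (fun n => ((ρ (fun ω => X ω + Gseq n ω - Cseq n ω) : ℝ) : EReal)) atTop ≤
        ((ρ (fun ω => Y ω - ε) : ℝ) : EReal) := by
    intro ε hε
    have hev : ∀ᶠ n in atTop, ∀ ω, Y ω - ε ≤ X ω + Gseq n ω - Cseq n ω := by
      rw [eventually_all]
      intro ω
      have h1 : ∀ᶠ n in atTop, ((Cseq n ω : ℝ) : EReal) < ((C ω + ε / 2 : ℝ) : EReal) := by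
        refine eventually_lt_of_limsup_lt (lt_of_le_of_lt (hC ω) ?_)
        exact_mod_cast (by linarith : C ω < C ω + ε / 2)
      have h2 : ∀ᶠ n in atTop, G ω - ε / 2 < Gseq n ω :=
        (hG ω).eventually (eventually_gt_nhds (by linarith))
      filter_upwards [h1, h2] with n h1 h2
      have h1' : Cseq n ω < C ω + ε / 2 := by exact_mod_cast h1
      simp only [hY]
      linarith
    have hle : ∀ᶠ n in atTop,
        ((ρ (fun ω => X ω + Gseq n ω - Cseq n ω) : ℝ) : EReal) ≤
          ((ρ (fun ω => Y ω - ε) : ℝ) : EReal) := by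
      filter_upwards [hev] with n hn
      exact_mod_cast hmono _ _ hn
    calc liminf (fun n => ((ρ (fun ω => X ω + Gseq n ω - Cseq n ω) : ℝ) : EReal)) atTop
        ≤ liminf (fun _ : ℕ => ((ρ (fun ω => Y ω - ε) : ℝ) : EReal)) atTop :=
          liminf_le_liminf hle
      _ = _ := liminf_const _
  -- Step 2: let ε → 0⁺ using continuity of ρ
  have htend : Tendsto (fun ε : ℝ => ((ρ (fun ω => Y ω - ε) : ℝ) : EReal)) (nhdsWithin 0 (Set.Ioi 0))
      (nhds ((ρ Y : ℝ) : EReal)) := by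
    have hc : Continuous fun ε : ℝ => (fun ω => Y ω - ε : Ω → ℝ) :=
      continuous_pi fun ω => (continuous_const.sub continuous_id)
    have : Tendsto (fun ε : ℝ => ρ (fun ω => Y ω - ε)) (nhds 0) (nhds (ρ Y)) := by
      have := (hcont.comp hc).tendsto 0
      simpa [Function.comp_def] using this
    exact (continuous_coe_real_ereal.tendsto _).comp (this.mono_left nhdsWithin_le_nhds)
  refine ge_of_tendsto htend ?_
  filter_upwards [self_mem_nhdsWithin] with ε (hε : (0:ℝ) < ε) using key ε hε
end
end
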